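/- Let S be a commutative ring with derivation ∂ over a field k of characteristic zero such that S is ∂-simple with ring of constants exactly k, and let K/k be a field extension. Then S ⊗_k K, with derivation ∂ ⊗ id (trivial derivation on K), is ∂-simple. -/

import Mathlib

open scoped TensorProduct

/-- If `S` is a `∂`-simple differential ring over a field `k` of characteristic zero, with
constants exactly `k`, and `K/k` is a field extension, then `S ⊗ₖ K` with the derivation
`D ⊗ id` is again `∂`-simple. -/
theorem stmt_9 {k S K : Type*} [Field k] [CharZero k] [CommRing S] [Nontrivial S]
    [Algebra k S] [Field K] [Algebra k K]
    (D : Derivation k S S)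
    (hsimple : ∀ I : Ideal S, (∀ a ∈ I, D a ∈ I) → I = ⊥ ∨ I = ⊤)
    (hconst : ∀ a : S, D a = 0 → ∃ c : k, algebraMap k S c = a)
    (D' : Derivation k (S ⊗[k] K) (S ⊗[k] K))
    (hD' : ∀ (s : S) (c : K), D' (s ⊗ₜ[k] c) = (D s) ⊗ₜ[k] c) :
    ∀ I : Ideal (S ⊗[k] K), (∀ a ∈ I, D' a ∈ I) → I = ⊥ ∨ I = ⊤ := by
  classical
  intro I hI
  rcases eq_or_ne I ⊥ with h | hbot
  · exact Or.inl h
  right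
  let b := Module.Basis.ofVectorSpace k K
  let B := Algebra.TensorProduct.basis S b
  -- the derivation acts coordinatewise with respect to the basis `B`
  have key : ∀ (x : S ⊗[k] K) (j : _), B.repr (D' x) j = D (B.repr x j) := by
    intro x
    induction x using TensorProduct.induction_on with
    | zero => simp
    | tmul s c =>
      intro j
      rw [hD']
      simp only [B, Algebra.TensorProduct.basis_repr_tmul, Finsupp.smul_apply,
        Finsupp.mapRange_apply, smul_eq_mul]
      rw [Derivation.leibniz]
      simp [smul_eq_mul, mul_comm]
    | add x y hx hy =>
      intro j
      simp [map_add, hx, hy]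
  -- choose a nonzero element of `I` with minimal support
  have hne : ∃ n, ∃ x ∈ I, x ≠ 0 ∧ (B.repr x).support.card = n := by
    obtain ⟨x, hxI, hx0⟩ := Submodule.exists_mem_ne_zero_of_ne_bot hbot
    exact ⟨_, x, hxI, hx0, rfl⟩
  obtain ⟨x, hxI, hx0, hxcard⟩ := Nat.find_spec hne
  set n := Nat.find hne with hn
  set T := (B.repr x).support with hT
  have hTne : T.Nonempty := by
    rw [hT, Finsupp.support_nonempty_iff]
    simpa using hx0
  obtain ⟨j₀, hj₀⟩ := hTne
  -- the ideal of possible `j₀`-coordinates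
  let J : Ideal S :=
  { carrier := {s | ∃ y ∈ I, (B.repr y).support ⊆ T ∧ B.repr y j₀ = s}
    add_mem' := by
      rintro a c ⟨y, hyI, hys, rfl⟩ ⟨z, hzI, hzs, rfl⟩
      refine ⟨y + z, I.add_mem hyI hzI, ?_, by simp⟩
      rw [map_add]
      exact (Finsupp.support_add).trans (Finset.union_subset hys hzs)
    zero_mem' := ⟨0, I.zero_mem, by simp, by simp⟩
    smul_mem' := by
      rintro s a ⟨y, hyI, hys, rfl⟩
      refine ⟨s • y, ?_, ?_, by simp⟩
      · rw [Algebra.smul_def]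
        exact I.mul_mem_left _ hyI
      · rw [map_smul]
        exact (Finsupp.support_smul).trans hys }
  have hJdiff : ∀ s ∈ J, D s ∈ J := by
    rintro s ⟨y, hyI, hys, rfl⟩
    refine ⟨D' y, hI y hyI, ?_, (key y j₀).symm ▸ rfl⟩
    intro j hj
    apply hys
    rw [Finsupp.mem_support_iff] at hj ⊢
    intro h0
    exact hj (by rw [key, h0, map_zero])
  have hJne : J ≠ ⊥ := by
    intro h
    have : (B.repr x) j₀ ∈ J := ⟨x, hxI, le_refl _, rfl⟩
    rw [h, Ideal.mem_bot] at this
    exact (Finsupp.mem_support_iff.mp hj₀) this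
  have hJtop : J = ⊤ := (hsimple J hJdiff).resolve_left hJne
  have h1J : (1 : S) ∈ J := hJtop ▸ Submodule.mem_top
  obtain ⟨y, hyI, hys, hy1⟩ := h1J
  have hy0 : y ≠ 0 := by
    intro h
    rw [h] at hy1
    simp at hy1
  -- support of `y` equals `T` by minimality
  have hycard : T.card ≤ (B.repr y).support.card := by
    rw [hxcard]
    exact Nat.find_min' hne ⟨y, hyI, hy0, rfl⟩
  have hysupp : (B.repr y).support = T := Finset.eq_of_subset_of_card_le hys hycard
  -- `D' y` has strictly smaller support, hence is zero by minimality
  have hDy : D' y = 0 := by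
    by_contra hDy0
    have hsub : (B.repr (D' y)).support ⊆ T.erase j₀ := by
      intro j hj
      rw [Finsupp.mem_support_iff, key] at hj
      rcases eq_or_ne j j₀ with rfl | hne'
      · rw [hy1] at hj
        exact absurd (Derivation.map_one_eq_zero D) hj
      · refine Finset.mem_erase.mpr ⟨hne', ?_⟩
        rw [← hysupp, Finsupp.mem_support_iff]
        intro h0
        exact hj (by rw [h0, map_zero])
    have hlt : (B.repr (D' y)).support.card < n := by
      calc (B.repr (D' y)).support.card ≤ (T.erase j₀).card := Finset.card_le_card hsub
        _ < T.card := Finset.card_erase_lt_of_mem hj₀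
        _ = n := hxcard
    exact Nat.find_min hne hlt ⟨D' y, hI y hyI, hDy0, rfl⟩
  -- all coordinates of `y` are constants
  have hconst' : ∀ j, ∃ c : k, algebraMap k S c = B.repr y j := by
    intro j
    apply hconst
    rw [← key, hDy, map_zero, Finsupp.coe_zero, Pi.zero_apply]
  choose γ hγ using hconst'
  -- `y = 1 ⊗ u` for `u = ∑ j in T, γ j • b j`
  have hyrepr : y = ∑ j ∈ T, (B.repr y j) • B j := by
    conv_lhs => rw [← B.linearCombination_repr y]
    rw [Finsupp.linearCombination_apply, Finsupp.sum, hysupp]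
  have hyu : y = (1 : S) ⊗ₜ[k] (∑ j ∈ T, γ j • b j) := by
    rw [hyrepr, TensorProduct.tmul_sum]
    refine Finset.sum_congr rfl fun j _ => ?_
    rw [← hγ j, Algebra.TensorProduct.basis_apply, TensorProduct.smul_tmul', smul_eq_mul,
      mul_one, Algebra.algebraMap_eq_smul_one, TensorProduct.smul_tmul]
  set u : K := ∑ j ∈ T, γ j • b j with hu
  have hu0 : u ≠ 0 := by
    intro h
    rw [hyu, h, TensorProduct.tmul_zero] at hy0
    exact hy0 rfl
  have hunit : IsUnit y := by
    rw [hyu, ← Algebra.TensorProduct.includeRight_apply]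
    exact (isUnit_iff_ne_zero.mpr hu0).map (Algebra.TensorProduct.includeRight (R := k) (A := S))
  exact I.eq_top_of_isUnit_mem hyI hunit
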